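/- Let A and V be d×d symmetric positive definite matrices, θ ∈ [0,1], h > 0, b ∈ ℝ^d; set B = V^{1/2}AV^{1/2} and W = I + (θ−½)(h/2)B, and assume I + (θh/2)B and W are invertible. (1) If x, y ∈ ℝ^d and ξ ∈ ℝ^d satisfy (I + (θh/2)VA)y = (I − ((1−θ)h/2)VA)x + (h/2)Vb + (hV)^{1/2}·V^{−1/2}·h^{−1/2}·(hV)^{1/2}ξ — equivalently y is the general Langevin proposal y = (I + (θh/2)VA)⁻¹[(I − ((1−θ)h/2)VA)x + (h/2)Vb + (hV)^{1/2}ξ] — then x̃ = V^{−1/2}x and ỹ = V^{−1/2}y satisfy (I + (θh/2)B)ỹ = (I − ((1−θ)h/2)B)x̃ + (h/2)V^{1/2}b + h^{1/2}ξ. (2) The transformed proposal corresponds to the matrix splitting with M = (2/h)W(I + (θh/2)B), N = (2/h)W(I − ((1−θ)h/2)B), 𝒜 = WB, β = WV^{1/2}b; in particular M − N = WB, M⁻¹N = (I + (θh/2)B)⁻¹(I − ((1−θ)h/2)B), M⁻¹β = (h/2)(I + (θh/2)B)⁻¹V^{1/2}b, and M⁻¹(Mᵀ+N)M⁻ᵀ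 = h(I + (θh/2)B)⁻². -/

import Mathlib

open Matrix
/-- The old Mathlib `Matrix.PosSemidef.sqrt` (removed upstream), with its original definition. -/
noncomputable def Matrix.PosSemidef.sqrt {n : Type*} [Fintype n] [DecidableEq n]
    {A : Matrix n n ℝ} (hA : A.PosSemidef) : Matrix n n ℝ :=
  hA.1.eigenvectorUnitary.1 * diagonal ((↑) ∘ (fun x => √x) ∘ hA.1.eigenvalues) *
    (star hA.1.eigenvectorUnitary : Matrix n n ℝ)

lemma langevin_sqrt_mul_self {n : Type*} [Fintype n] [DecidableEq n]
    {A : Matrix n n ℝ} (hA : A.PosSemidef) : hA.sqrt * hA.sqrt = A := by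
  have hspec := hA.1.spectral_theorem
  rw [Unitary.conjStarAlgAut_apply] at hspec
  unfold Matrix.PosSemidef.sqrt
  have hU : (star hA.1.eigenvectorUnitary : Matrix n n ℝ) * hA.1.eigenvectorUnitary.1 = 1 :=
    Unitary.star_mul_self_of_mem hA.1.eigenvectorUnitary.2
  have hD : diagonal ((↑) ∘ (fun x => √x) ∘ hA.1.eigenvalues) *
      diagonal ((↑) ∘ (fun x => √x) ∘ hA.1.eigenvalues)
      = diagonal (RCLike.ofReal ∘ hA.1.eigenvalues : n → ℝ) := by
    rw [diagonal_mul_diagonal]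
    congr 1; funext i
    simp [Real.mul_self_sqrt (hA.eigenvalues_nonneg i)]
  conv_rhs => rw [hspec]
  rw [← hD]
  simp only [Matrix.mul_assoc]
  rw [← Matrix.mul_assoc (star _ : Matrix n n ℝ) hA.1.eigenvectorUnitary.1, hU, Matrix.one_mul]

lemma langevin_sqrt_transpose {n : Type*} [Fintype n] [DecidableEq n]
    {A : Matrix n n ℝ} (hA : A.PosSemidef) : hA.sqrtᵀ = hA.sqrt := by
  unfold Matrix.PosSemidef.sqrt
  rw [transpose_mul, transpose_mul, diagonal_transpose, Matrix.mul_assoc]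
  congr 1

/-- Commutation of two affine polynomials in the same matrix. -/
lemma langevin_comm_aux {d : ℕ} (B : Matrix (Fin d) (Fin d) ℝ) (a c : ℝ) :
    (1 + a • B) * (1 + c • B) = (1 + c • B) * (1 + a • B) := by
  simp only [mul_add, add_mul, mul_one, one_mul, Matrix.smul_mul, Matrix.mul_smul, smul_smul,
    mul_comm a c]
  abel

/-- (Lemma: change of coordinates for the general Langevin proposal.)
(1) If `y` is the general Langevin proposal from `x` with noise `ξ`, then
`x̃ = V^{-1/2}x`, `ỹ = V^{-1/2}y` satisfy
`(I + (θh/2)B)ỹ = (I - ((1-θ)h/2)B)x̃ + (h/2)V^{1/2}b + h^{1/2}ξ` with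
`B = V^{1/2}AV^{1/2}`.  (2) The transformed proposal corresponds to the matrix
splitting `M = (2/h)W(I + (θh/2)B)`, `N = (2/h)W(I - ((1-θ)h/2)B)`, `𝒜 = WB`,
`β = WV^{1/2}b`, with the stated identities. -/
theorem general_langevin_transformed_splitting
    {d : ℕ} (A V : Matrix (Fin d) (Fin d) ℝ) (hA : A.PosDef) (hV : V.PosDef)
    (θ h : ℝ) (hθ : θ ∈ Set.Icc (0 : ℝ) 1) (hh : 0 < h) (b : Fin d → ℝ) :
    (let sqrtV : Matrix (Fin d) (Fin d) ℝ := Matrix.PosSemidef.sqrt hV.posSemidef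
     let B : Matrix (Fin d) (Fin d) ℝ := sqrtV * A * sqrtV
     let W : Matrix (Fin d) (Fin d) ℝ := 1 + ((θ - 1/2) * (h/2)) • B
     ∀ _ : IsUnit (1 + (θ * h / 2) • B).det,
     ∀ _ : IsUnit W.det,
     ((∀ x y ξ : Fin d → ℝ,
        y = (1 + (θ * h / 2) • (V * A))⁻¹ *ᵥ
              ((1 - ((1 - θ) * h / 2) • (V * A)) *ᵥ x + (h / 2) • (V *ᵥ b)
                + Real.sqrt h • (sqrtV *ᵥ ξ)) →
        (1 + (θ * h / 2) • B) *ᵥ (sqrtV⁻¹ *ᵥ y)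
          = (1 - ((1 - θ) * h / 2) • B) *ᵥ (sqrtV⁻¹ *ᵥ x)
            + (h / 2) • (sqrtV *ᵥ b) + Real.sqrt h • ξ) ∧
      (let M : Matrix (Fin d) (Fin d) ℝ := (2 / h) • (W * (1 + (θ * h / 2) • B))
       let N : Matrix (Fin d) (Fin d) ℝ := (2 / h) • (W * (1 - ((1 - θ) * h / 2) • B))
       let β : Fin d → ℝ := (W * sqrtV) *ᵥ b
       M - N = W * B ∧
       IsUnit M.det ∧
       M⁻¹ * N = (1 + (θ * h / 2) • B)⁻¹ * (1 - ((1 - θ) * h / 2) • B) ∧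
       M⁻¹ *ᵥ β = (h / 2) • ((1 + (θ * h / 2) • B)⁻¹ *ᵥ (sqrtV *ᵥ b)) ∧
       M⁻¹ * (Mᵀ + N) * M⁻¹ᵀ = h • ((1 + (θ * h / 2) • B)⁻¹ * (1 + (θ * h / 2) • B)⁻¹)))) := by
  intro S B W hPdet hWdet
  have hh0 : (h : ℝ) ≠ 0 := ne_of_gt hh
  -- basic facts about S
  have hSS : S * S = V := langevin_sqrt_mul_self hV.posSemidef
  have hSsymm : Sᵀ = S := by
    exact langevin_sqrt_transpose hV.posSemidef
  have hSdet : IsUnit S.det := by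
    have hdV : 0 < V.det := hV.det_pos
    rw [← hSS, det_mul] at hdV
    rcases eq_or_ne S.det 0 with h0 | h0
    · rw [h0, mul_zero] at hdV; exact absurd hdV (lt_irrefl 0)
    · exact isUnit_iff_ne_zero.mpr h0
  have hAsymm : Aᵀ = A := by
    have := hA.1
    rwa [Matrix.IsHermitian, conjTranspose_eq_transpose_of_trivial] at this
  have hBsymm : Bᵀ = B := by
    show (S * A * S)ᵀ = S * A * S
    rw [transpose_mul, transpose_mul, hSsymm, hAsymm, Matrix.mul_assoc]
  set P : Matrix (Fin d) (Fin d) ℝ := 1 + (θ * h / 2) • B with hPdefn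
  set Q : Matrix (Fin d) (Fin d) ℝ := 1 - ((1 - θ) * h / 2) • B with hQdefn
  -- conjugation identities
  have hVA : V * A = S * (S * A) := by rw [← hSS, Matrix.mul_assoc]
  have hKey0 : S⁻¹ * (V * A) = B * S⁻¹ := by
    rw [hVA, Matrix.nonsing_inv_mul_cancel_left _ _ hSdet]
    show S * A = S * A * S * S⁻¹
    rw [Matrix.mul_nonsing_inv_cancel_right _ _ hSdet]
  have keyP : S⁻¹ * (1 + (θ * h / 2) • (V * A)) = P * S⁻¹ := by
    rw [hPdefn, mul_add, add_mul, Matrix.mul_one, Matrix.one_mul, Matrix.mul_smul,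
      Matrix.smul_mul, hKey0]
  have keyQ : S⁻¹ * (1 - ((1 - θ) * h / 2) • (V * A)) = Q * S⁻¹ := by
    have e1 : S⁻¹ * (1 - ((1 - θ) * h / 2) • (V * A))
        = S⁻¹ - ((1 - θ) * h / 2) • (S⁻¹ * (V * A)) := by
      rw [mul_sub, Matrix.mul_one, Matrix.mul_smul]
    have e2 : Q * S⁻¹ = S⁻¹ - ((1 - θ) * h / 2) • (B * S⁻¹) := by
      rw [hQdefn, sub_mul, Matrix.one_mul, Matrix.smul_mul]
    rw [e1, e2, hKey0]
  have hVAdet : IsUnit (1 + (θ * h / 2) • (V * A)).det := by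
    have heq : 1 + (θ * h / 2) • (V * A) = S * (P * S⁻¹) := by
      have := keyP
      calc 1 + (θ * h / 2) • (V * A)
          = S * (S⁻¹ * (1 + (θ * h / 2) • (V * A))) := by
            rw [Matrix.mul_nonsing_inv_cancel_left _ _ hSdet]
        _ = S * (P * S⁻¹) := by rw [keyP]
    rw [heq, det_mul, det_mul]
    exact hSdet.mul (hPdet.mul (S.isUnit_nonsing_inv_det hSdet))
  constructor
  · -- part (1)
    intro x y ξ hy
    have hy' : (1 + (θ * h / 2) • (V * A)) *ᵥ y
        = (1 - ((1 - θ) * h / 2) • (V * A)) *ᵥ x + (h / 2) • (V *ᵥ b)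
            + Real.sqrt h • (S *ᵥ ξ) := by
      rw [hy, Matrix.mulVec_mulVec, Matrix.mul_nonsing_inv _ hVAdet, Matrix.one_mulVec]
    have := congrArg (fun v => S⁻¹ *ᵥ v) hy'
    simp only [Matrix.mulVec_add, Matrix.mulVec_smul, Matrix.mulVec_mulVec] at this
    rw [keyP, keyQ] at this
    have hSinvV : S⁻¹ * V = S := by
      rw [← hSS, Matrix.nonsing_inv_mul_cancel_left _ _ hSdet]
    have hSinvS : S⁻¹ * S = 1 := Matrix.nonsing_inv_mul _ hSdet
    rw [hSinvV, hSinvS] at this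
    simpa [Matrix.mulVec_mulVec, Matrix.one_mulVec, Matrix.mulVec_smul] using this
  · -- part (2)
    intro M N β
    have hMdefn : M = (2 / h) • (W * P) := rfl
    have hNdefn : N = (2 / h) • (W * Q) := rfl
    -- inverses & commutation
    have hWP : W * P = P * W := langevin_comm_aux B _ _
    have hPinv : P * P⁻¹ = 1 := Matrix.mul_nonsing_inv _ hPdet
    have hWinv : W * W⁻¹ = 1 := Matrix.mul_nonsing_inv _ hWdet
    have hMright : M * ((h / 2) • (P⁻¹ * W⁻¹)) = 1 := by
      rw [hMdefn, smul_mul_smul_comm]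
      have : (2 / h) * (h / 2) = 1 := by field_simp
      rw [this, one_smul]
      rw [Matrix.mul_assoc, ← Matrix.mul_assoc P, hPinv, Matrix.one_mul, hWinv]
    have hMunit : IsUnit M.det := Matrix.isUnit_det_of_right_inverse hMright
    have hMinv : M⁻¹ = (h / 2) • (P⁻¹ * W⁻¹) := Matrix.inv_eq_right_inv hMright
    have hWsymm : Wᵀ = W := by
      show (1 + ((θ - 1/2) * (h/2)) • B)ᵀ = _
      rw [transpose_add, transpose_one, transpose_smul, hBsymm]
    have hPsymm : Pᵀ = P := by
      rw [hPdefn, transpose_add, transpose_one, transpose_smul, hBsymm]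
    have hMsymm : Mᵀ = M := by
      rw [hMdefn, transpose_smul, transpose_mul, hPsymm, hWsymm, ← hWP]
    have hPQ : P - Q = (h / 2) • B := by rw [hPdefn, hQdefn]; module
    have hPplusQ : P + Q = (2 : ℝ) • W := by
      show _ = (2:ℝ) • (1 + ((θ - 1/2) * (h/2)) • B)
      rw [hPdefn, hQdefn]; module
    refine ⟨?_, hMunit, ?_, ?_, ?_⟩
    · -- M - N = W * B
      rw [hMdefn, hNdefn, ← smul_sub, ← mul_sub, hPQ, Matrix.mul_smul, smul_smul]
      have : (2 / h) * (h / 2) = 1 := by field_simp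
      rw [this, one_smul]
    · -- M⁻¹ * N = P⁻¹ * Q
      rw [hMinv, hNdefn, smul_mul_smul_comm]
      have : (h / 2) * (2 / h) = 1 := by field_simp
      rw [this, one_smul, Matrix.mul_assoc, Matrix.nonsing_inv_mul_cancel_left _ _ hWdet]
    · -- M⁻¹ *ᵥ β
      have hβ : β = (W * S) *ᵥ b := rfl
      rw [hβ, Matrix.mulVec_mulVec, hMinv, Matrix.smul_mul, Matrix.mul_assoc,
        Matrix.nonsing_inv_mul_cancel_left _ _ hWdet, smul_mulVec,
        ← Matrix.mulVec_mulVec]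
    · -- covariance identity
      have hMinvT : M⁻¹ᵀ = (h / 2) • (W⁻¹ * P⁻¹) := by
        rw [hMinv, transpose_smul, transpose_mul, transpose_nonsing_inv, transpose_nonsing_inv,
          hPsymm, hWsymm]
      have hsum : Mᵀ + N = (4 / h) • (W * W) := by
        rw [hMsymm, hMdefn, hNdefn, ← smul_add, ← mul_add, hPplusQ, Matrix.mul_smul, smul_smul]
        congr 1
        field_simp; ring
      have hc : (h / 2) * (4 / h) * (h / 2) = h := by field_simp; ring
      have hmat : P⁻¹ * W⁻¹ * (W * W) * (W⁻¹ * P⁻¹) = P⁻¹ * P⁻¹ := by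
        simp only [Matrix.mul_assoc]
        rw [Matrix.nonsing_inv_mul_cancel_left _ _ hWdet,
          Matrix.mul_nonsing_inv_cancel_left _ _ hWdet]
      rw [hsum, hMinvT, hMinv, smul_mul_smul_comm, smul_mul_smul_comm, hc, hmat]
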